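/- Let p ≤ r with r ≡ a mod (p-1) and 1 ≤ a ≤ p-1. Then ∑_{0 < l < r, l ≡ a mod (p-1)} C(r,l) ≡ 0 mod p. -/
import Mathlib

open Finset

/-- Fermat: powers in `ZMod p` only depend on exponent mod `p-1` (for positive exponents). -/
lemma pow_eq_pow_of_mod_eq (p : ℕ) [Fact p.Prime] (y : ZMod p) {m n : ℕ}
    (hm : 1 ≤ m) (hn : 1 ≤ n) (h : m % (p - 1) = n % (p - 1)) : y ^ m = y ^ n := by
  rcases eq_or_ne y 0 with rfl | hy
  · rw [zero_pow (by omega), zero_pow (by omega)]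
  · have hq : y ^ (p - 1) = 1 := ZMod.pow_card_sub_one_eq_one hy
    have key : ∀ k : ℕ, y ^ k = y ^ (k % (p - 1)) := by
      intro k
      conv_lhs => rw [← Nat.div_add_mod k (p - 1)]
      rw [pow_add, pow_mul, hq, one_pow, one_mul]
    rw [key m, key n, h]

lemma sum_pow_units' (p : ℕ) [Fact p.Prime] (i : ℕ) :
    (∑ x : (ZMod p)ˣ, (x : ZMod p) ^ i) = if (p - 1) ∣ i then -1 else 0 := by
  classical
  have := FiniteField.sum_pow_units (ZMod p) i
  rw [ZMod.card] at this
  simpa using this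

/-- For `p ≤ r`, `r ≡ a mod (p-1)`, `1 ≤ a ≤ p-1`:
`∑_{0 < l < r, l ≡ a mod (p-1)} C(r,l) ≡ 0 mod p`. -/
theorem stmt_12 (p r a : ℕ) [Fact p.Prime] (hr : p ≤ r)
    (hra : r % (p - 1) = a % (p - 1)) (ha1 : 1 ≤ a) (ha2 : a ≤ p - 1) :
    (∑ l ∈ Finset.Ioo 0 r,
        if l % (p - 1) = a % (p - 1) then (r.choose l : ZMod p) else 0) = 0 := by
  classical
  have hp2 : 2 ≤ p := (Fact.out : p.Prime).two_le
  set q := p - 1 with hq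
  have hq1 : 1 ≤ q := by omega
  have haq : a ≤ q := ha2
  have hqa : a + (q - a) = q := by omega
  -- the divisibility condition
  have hdvd : ∀ l : ℕ, (q ∣ (q - a + l)) ↔ l % q = a % q := by
    intro l
    rw [show q - a + l = l + (q - a) by omega]
    constructor
    · intro h
      have h2 : l + (q - a) ≡ 0 [MOD q] := (Nat.modEq_zero_iff_dvd).mpr h
      have h3 : a + (q - a) ≡ 0 [MOD q] := by
        rw [hqa]; exact (Nat.modEq_zero_iff_dvd).mpr dvd_rfl
      exact Nat.ModEq.add_right_cancel' (q - a) (h2.trans h3.symm)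
    · intro h
      have h2 : l + (q - a) ≡ a + (q - a) [MOD q] := Nat.ModEq.add_right _ h
      rw [hqa] at h2
      exact (Nat.modEq_zero_iff_dvd).mp
        (h2.trans ((Nat.modEq_zero_iff_dvd).mpr dvd_rfl))
  -- the key sum, computed two ways
  have expand : ∀ n : ℕ, 1 ≤ n →
      (∑ x : (ZMod p)ˣ, (x : ZMod p) ^ (q - a) * (1 + (x : ZMod p)) ^ n) =
      ∑ l ∈ range (n + 1), if l % q = a % q then -(n.choose l : ZMod p) else 0 := by
    intro n hn
    have step : ∀ x : (ZMod p)ˣ, (x : ZMod p) ^ (q - a) * (1 + (x : ZMod p)) ^ n =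
        ∑ l ∈ range (n + 1), (n.choose l : ZMod p) * (x : ZMod p) ^ (q - a + l) := by
      intro x
      rw [add_comm (1 : ZMod p), add_pow, Finset.mul_sum]
      refine Finset.sum_congr rfl fun l _ => ?_
      rw [pow_add]
      ring
    rw [Finset.sum_congr rfl fun x _ => step x, Finset.sum_comm]
    refine Finset.sum_congr rfl fun l _ => ?_
    rw [← Finset.mul_sum, sum_pow_units' p, ← hq]
    simp only [hdvd l]
    split <;> ring
  have e1 := expand r (by omega)
  have e2 := expand a ha1
  have epow : ∀ x : (ZMod p)ˣ,
      (x : ZMod p) ^ (q - a) * (1 + (x : ZMod p)) ^ r =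
      (x : ZMod p) ^ (q - a) * (1 + (x : ZMod p)) ^ a := by
    intro x
    rw [pow_eq_pow_of_mod_eq p _ (by omega) ha1 hra]
  rw [Finset.sum_congr rfl fun x _ => epow x, e2] at e1
  -- peel off endpoints from each side
  have split : ∀ n : ℕ, 1 ≤ n → ∀ f : ℕ → ZMod p,
      ∑ l ∈ range (n + 1), f l = f 0 + (∑ l ∈ Ioo 0 n, f l) + f n := by
    intro n hn f
    rw [Finset.sum_range_succ]
    congr 1
    have : range n = insert 0 (Ioo 0 n) := by
      ext l; simp [Finset.mem_Ioo]; omega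
    rw [this, Finset.sum_insert (by simp)]
  rw [split r (by omega), split a ha1] at e1
  have hmid : (∑ l ∈ Ioo 0 a,
      if l % q = a % q then -(a.choose l : ZMod p) else 0) = 0 := by
    refine Finset.sum_eq_zero fun l hl => ?_
    rw [Finset.mem_Ioo] at hl
    rw [if_neg]
    intro h
    have h1 : l % q = l := Nat.mod_eq_of_lt (lt_of_lt_of_le hl.2 haq)
    rcases Nat.lt_or_ge a q with h' | h'
    · rw [Nat.mod_eq_of_lt h'] at h; omega
    · have haq' : a = q := le_antisymm haq h'
      rw [haq', Nat.mod_self] at h; omega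
  rw [hmid] at e1
  simp only [Nat.choose_self, Nat.choose_zero_right, Nat.cast_one, hra] at e1
  have hS : (∑ l ∈ Finset.Ioo 0 r,
      if l % q = a % q then -(r.choose l : ZMod p) else 0) = 0 := by
    linear_combination -e1
  calc (∑ l ∈ Finset.Ioo 0 r, if l % q = a % q then (r.choose l : ZMod p) else 0)
      = -∑ l ∈ Finset.Ioo 0 r,
          (if l % q = a % q then -(r.choose l : ZMod p) else 0) := by
        rw [← Finset.sum_neg_distrib]
        exact Finset.sum_congr rfl fun l _ => by split <;> simp
    _ = 0 := by rw [hS, neg_zero]
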